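/- Let λ > 0 and X ∈ ℝ^{m×n} with XXᵀ = UΛUᵀ, where U ∈ ℝ^{m×m} is orthogonal and Λ is diagonal with pairwise distinct positive diagonal entries λ₁,…,λ_m, each distinct from λ. If W₁ ∈ ℝ^{k×m}, W₂ ∈ ℝ^{m×k} form a critical point of the sum loss L_σ, i.e. W₂ᵀ(W₂W₁ − I_m)XXᵀ + λW₁ = 0 and (W₂W₁ − I_m)XXᵀW₁ᵀ + λW₂ = 0, then W₁ = W₂ᵀ and there exists an index set 𝓘 ⊆ {i : λᵢ > λ} with |𝓘| ≤ k such that W₂W₁ = U D Uᵀ, where D is the diagonal matrix with Dᵢᵢ = 1 − λ/λᵢ for i ∈ 𝓘 and Dᵢᵢ = 0 otherwise. -/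

import Mathlib

open Matrix

set_option maxHeartbeats 1000000 in
lemma key_lemma {m k : ℕ} (lam : ℝ) (hlam : 0 < lam) (l : Fin m → ℝ)
    (hpos : ∀ i, 0 < l i)
    (hdist : ∀ i j : Fin m, i ≠ j → l i ≠ l j)
    (hne : ∀ i, l i ≠ lam)
    (Q : Matrix (Fin k) (Fin m) ℝ) (P : Matrix (Fin m) (Fin k) ℝ)
    (e1 : lam • Q = Pᵀ * ((1 - P * Q) * Matrix.diagonal l))
    (e2 : lam • P = ((1 - P * Q) * Matrix.diagonal l) * Qᵀ) :
    Q = Pᵀ ∧ ∃ I : Finset (Fin m), (∀ i ∈ I, lam < l i) ∧ I.card ≤ k ∧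
      P * Q = Matrix.diagonal (fun i => if i ∈ I then 1 - lam / l i else 0) := by
  classical
  set Λ : Matrix (Fin m) (Fin m) ℝ := Matrix.diagonal l with hΛ
  set M : Matrix (Fin m) (Fin m) ℝ := P * Q with hMdef
  set Z : Matrix (Fin m) (Fin m) ℝ := (1 - M) * Λ with hZdef
  set G : Matrix (Fin m) (Fin m) ℝ := P * Pᵀ with hGdef
  have hZt : Zᵀ = Λ - Λ * Mᵀ := by
    rw [hZdef, Matrix.transpose_mul, Matrix.transpose_sub, Matrix.transpose_one,
      hΛ, Matrix.diagonal_transpose, Matrix.mul_sub, Matrix.mul_one]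
  have hZexp : Z = Λ - M * Λ := by
    rw [hZdef, Matrix.sub_mul, Matrix.one_mul]
  have hPt : lam • Pᵀ = Q * Zᵀ := by
    rw [← Matrix.transpose_smul, e2, Matrix.transpose_mul, Matrix.transpose_transpose]
  have hG1 : lam • G = M * Zᵀ := by
    calc lam • G = P * (lam • Pᵀ) := by rw [hGdef, Matrix.mul_smul]
    _ = P * (Q * Zᵀ) := by rw [hPt]
    _ = M * Zᵀ := by rw [hMdef, Matrix.mul_assoc]
  have hG2 : lam • G = Z * Mᵀ := by
    calc lam • G = (lam • P) * Pᵀ := by rw [hGdef, Matrix.smul_mul]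
    _ = Z * (Qᵀ * Pᵀ) := by rw [e2, Matrix.mul_assoc]
    _ = Z * Mᵀ := by rw [hMdef, Matrix.transpose_mul]
  have hMΛ : M * Λ = Λ * Mᵀ := by
    have h := hG1.symm.trans hG2
    rw [hZt, hZexp, Matrix.mul_sub, Matrix.sub_mul] at h
    simp only [← Matrix.mul_assoc] at h
    exact sub_left_inj.mp h
  have hZsym : Zᵀ = Z := by rw [hZt, hZexp, hMΛ]
  have hZh : Z.IsHermitian := by
    ext i j
    simpa [Matrix.conjTranspose_apply] using congrFun (congrFun hZsym i) j
  set V : Matrix (Fin m) (Fin m) ℝ := (hZh.eigenvectorUnitary : Matrix (Fin m) (Fin m) ℝ)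
    with hVdef
  set μ : Fin m → ℝ := hZh.eigenvalues with hμdef
  set Dm : Matrix (Fin m) (Fin m) ℝ := Matrix.diagonal μ with hDm
  have hVtV : Vᵀ * V = 1 := by
    have h := Unitary.coe_star_mul_self hZh.eigenvectorUnitary
    rw [hVdef, ← Matrix.conjTranspose_eq_transpose_of_trivial]
    exact h
  have hVVt : V * Vᵀ = 1 := mul_eq_one_comm.mp hVtV
  have hcanc1 : ∀ {p : ℕ} (x : Matrix (Fin m) (Fin p) ℝ), Vᵀ * (V * x) = x := by
    intro p x; rw [← Matrix.mul_assoc, hVtV, Matrix.one_mul]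
  have hcanc2 : ∀ {p : ℕ} (x : Matrix (Fin m) (Fin p) ℝ), V * (Vᵀ * x) = x := by
    intro p x; rw [← Matrix.mul_assoc, hVVt, Matrix.one_mul]
  have hspec : Z = V * Dm * Vᵀ := by
    have h := hZh.spectral_theorem
    simp at h
    rw [Matrix.star_eq_conjTranspose, Matrix.conjTranspose_eq_transpose_of_trivial] at h
    exact h
  set Λi : Matrix (Fin m) (Fin m) ℝ := Matrix.diagonal (fun i => (l i)⁻¹) with hΛi
  have hΛΛi : Λ * Λi = 1 := by
    rw [hΛ, hΛi, Matrix.diagonal_mul_diagonal]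
    have h : (fun i => l i * (l i)⁻¹) = fun _ => (1 : ℝ) := by
      funext i; exact mul_inv_cancel₀ (ne_of_gt (hpos i))
    rw [h, Matrix.diagonal_one]
  have h1M : 1 - M = Z * Λi := by
    rw [hZdef, Matrix.mul_assoc, hΛΛi, Matrix.mul_one]
  have hMz : M = 1 - Z * Λi := by rw [← h1M, sub_sub_cancel]
  have hMt : Mᵀ = 1 - Λi * Z := by
    rw [hMz, Matrix.transpose_sub, Matrix.transpose_one, Matrix.transpose_mul,
      hΛi, Matrix.diagonal_transpose, hZsym, ← hΛi]
  have hM1 : lam • M = G * Z := by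
    calc lam • M = P * (lam • Q) := by rw [hMdef, Matrix.mul_smul]
    _ = P * (Pᵀ * Z) := by rw [e1]
    _ = G * Z := by rw [hGdef, Matrix.mul_assoc]
  have hM2 : M * (Z * Z) = (lam * lam) • M := by
    have h : lam • (lam • M) = (lam • G) * Z := by rw [hM1, Matrix.smul_mul]
    rw [hG1, hZsym, smul_smul, Matrix.mul_assoc] at h
    exact h.symm
  have hP2 : Z * Z * P = (lam * lam) • P := by
    have hQt : lam • Qᵀ = Z * P := by
      rw [← Matrix.transpose_smul, e1, Matrix.transpose_mul, Matrix.transpose_transpose, hZsym]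
    have h : lam • (lam • P) = Z * (lam • Qᵀ) := by rw [e2, Matrix.mul_smul]
    rw [hQt, ← Matrix.mul_assoc, smul_smul] at h
    exact h.symm
  set W : Matrix (Fin m) (Fin m) ℝ := Z * Z - (lam * lam) • (1 : Matrix (Fin m) (Fin m) ℝ)
    with hWdef
  have hMW : M * W = 0 := by
    rw [hWdef, Matrix.mul_sub, Matrix.mul_smul, Matrix.mul_one, hM2, sub_self]
  have hWP : W * P = 0 := by
    rw [hWdef, Matrix.sub_mul, Matrix.smul_mul, Matrix.one_mul, hP2, sub_self]
  have hWsym : Wᵀ = W := by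
    rw [hWdef, Matrix.transpose_sub, Matrix.transpose_mul, hZsym, Matrix.transpose_smul,
      Matrix.transpose_one]
  have hWMt : W * Mᵀ = 0 := by
    have h := congrArg Matrix.transpose hMW
    rwa [Matrix.transpose_mul, hWsym, Matrix.transpose_zero] at h
  have hW1 : W = Z * (Λi * W) := by
    have h : (1 - Z * Λi) * W = 0 := by rw [← hMz]; exact hMW
    rw [Matrix.sub_mul, Matrix.one_mul, sub_eq_zero, Matrix.mul_assoc] at h
    exact h
  have hW2 : W = W * (Λi * Z) := by
    have h : W * (1 - Λi * Z) = 0 := by rw [← hMt]; exact hWMt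
    rw [Matrix.mul_sub, Matrix.mul_one, sub_eq_zero] at h
    exact h
  set C : Matrix (Fin m) (Fin m) ℝ := Vᵀ * (Λi * V) with hCdef
  set Dp : Matrix (Fin m) (Fin m) ℝ := Matrix.diagonal (fun j => μ j * μ j - lam * lam)
    with hDp
  have hsmul1 : (lam * lam) • (1 : Matrix (Fin m) (Fin m) ℝ)
      = Matrix.diagonal (fun _ => lam * lam) := by
    ext i j
    by_cases h : i = j
    · subst h; simp [Matrix.one_apply_eq]
    · simp [Matrix.one_apply_ne h, Matrix.diagonal_apply_ne _ h]
  have hDpalt : Dp = Dm * Dm - (lam * lam) • 1 := by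
    rw [hDp, hDm, Matrix.diagonal_mul_diagonal, hsmul1, Matrix.diagonal_sub]
  have hWV : W = V * Dp * Vᵀ := by
    rw [hWdef, hDpalt, hspec]
    simp only [Matrix.mul_sub, Matrix.sub_mul, Matrix.mul_smul, Matrix.smul_mul,
      Matrix.mul_one, Matrix.one_mul]
    simp only [Matrix.mul_assoc, hcanc1, hcanc2, hVtV, hVVt, Matrix.mul_one]
  have conj_inj : ∀ A B : Matrix (Fin m) (Fin m) ℝ, V * A * Vᵀ = V * B * Vᵀ → A = B := by
    intro A B h
    have h2 := congrArg (fun Y => Vᵀ * (Y * V)) h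
    simpa only [Matrix.mul_assoc, hcanc1, hVtV, Matrix.mul_one] using h2
  have hVtZ : Vᵀ * Z = Dm * Vᵀ := by
    rw [hspec]
    simp only [Matrix.mul_assoc, hcanc1]
  have hZV : Z * V = V * Dm := by
    rw [hspec]
    simp only [Matrix.mul_assoc, hVtV, Matrix.mul_one]
  have Eq1 : Dp = Dm * (C * Dp) := by
    apply conj_inj
    calc V * Dp * Vᵀ = W := hWV.symm
    _ = Z * (Λi * W) := hW1
    _ = V * (Dm * (C * Dp)) * Vᵀ := by
        rw [hspec, hWV, hCdef]
        simp only [Matrix.mul_assoc, hcanc1, hcanc2]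
  have Eq2 : Dp = Dp * (C * Dm) := by
    apply conj_inj
    calc V * Dp * Vᵀ = W := hWV.symm
    _ = W * (Λi * Z) := hW2
    _ = V * (Dp * (C * Dm)) * Vᵀ := by
        rw [hspec, hWV, hCdef]
        simp only [Matrix.mul_assoc, hcanc1, hcanc2]
  have EqVC : V * C = Λi * V := by
    rw [hCdef, ← Matrix.mul_assoc, hVVt, Matrix.one_mul]
  have EqG : lam • (Vᵀ * G * V) = Dm - Dm * (C * Dm) := by
    have hMZ : lam • G = Z - Z * (Λi * Z) := by
      rw [hG1, hZsym, hMz, Matrix.sub_mul, Matrix.one_mul, Matrix.mul_assoc]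
    have h3 : Vᵀ * (lam • G) * V = Vᵀ * (Z - Z * (Λi * Z)) * V := by rw [hMZ]
    rw [Matrix.mul_smul, Matrix.smul_mul] at h3
    rw [h3, Matrix.mul_sub, Matrix.sub_mul]
    congr 1
    · rw [hVtZ, Matrix.mul_assoc, hVtV, Matrix.mul_one]
    · rw [hspec, hCdef]
      simp only [Matrix.mul_assoc, hcanc1, hcanc2, hVtV, Matrix.mul_one]
  -- entrywise facts
  have hVGV : Vᵀ * G * V = (Vᵀ * P) * (Vᵀ * P)ᵀ := by
    rw [hGdef, Matrix.transpose_mul, Matrix.transpose_transpose]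
    simp only [Matrix.mul_assoc]
  have hGpsd : ∀ j, 0 ≤ (Vᵀ * G * V) j j := by
    intro j
    rw [hVGV, Matrix.mul_apply]
    apply Finset.sum_nonneg
    intro c _
    rw [Matrix.transpose_apply]
    exact mul_self_nonneg _
  have hCapply : ∀ i j, C i j = ∑ a, V a i * ((l a)⁻¹ * V a j) := by
    intro i j
    rw [hCdef, Matrix.mul_apply]
    apply Finset.sum_congr rfl
    intro a _
    rw [Matrix.transpose_apply, hΛi, Matrix.diagonal_mul]
  have hVcol : ∀ i j, (∑ a, V a i * V a j) = (1 : Matrix (Fin m) (Fin m) ℝ) i j := by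
    intro i j
    rw [← hVtV, Matrix.mul_apply]
    apply Finset.sum_congr rfl
    intro a _
    rw [Matrix.transpose_apply]
  have hVrow : ∀ a b, (∑ j, V a j * V b j) = (1 : Matrix (Fin m) (Fin m) ℝ) a b := by
    intro a b
    rw [← hVVt, Matrix.mul_apply]
    apply Finset.sum_congr rfl
    intro j _
    rw [Matrix.transpose_apply]
  have hCpos : ∀ j, 0 < C j j := by
    intro j
    have h1 : (∑ a, V a j * V a j) = 1 := by rw [hVcol j j, Matrix.one_apply_eq]
    have h2 : ∃ a, V a j ≠ 0 := by
      by_contra h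
      push_neg at h
      rw [Finset.sum_eq_zero (fun a _ => by rw [h a, zero_mul])] at h1
      norm_num at h1
    obtain ⟨a₀, ha₀⟩ := h2
    rw [hCapply]
    apply Finset.sum_pos'
    · intro a _
      have h3 : V a j * ((l a)⁻¹ * V a j) = (l a)⁻¹ * (V a j * V a j) := by ring
      rw [h3]
      exact mul_nonneg (inv_nonneg.mpr (hpos a).le) (mul_self_nonneg _)
    · refine ⟨a₀, Finset.mem_univ _, ?_⟩
      have h3 : V a₀ j * ((l a₀)⁻¹ * V a₀ j) = (l a₀)⁻¹ * (V a₀ j * V a₀ j) := by ring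
      rw [h3]
      exact mul_pos (inv_pos.mpr (hpos a₀)) (mul_self_pos.mpr ha₀)
  have scalar1 : ∀ i j, (Matrix.diagonal (fun j => μ j * μ j - lam * lam)
      : Matrix (Fin m) (Fin m) ℝ) i j = μ i * (C i j * (μ j * μ j - lam * lam)) := by
    intro i j
    have h := Matrix.ext_iff.mpr Eq1 i j
    rw [hDp, hDm] at h
    rwa [Matrix.diagonal_mul, Matrix.mul_diagonal] at h
  have scalar2 : ∀ i j, (Matrix.diagonal (fun j => μ j * μ j - lam * lam)
      : Matrix (Fin m) (Fin m) ℝ) i j = (μ i * μ i - lam * lam) * (C i j * μ j) := by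
    intro i j
    have h := Matrix.ext_iff.mpr Eq2 i j
    rw [hDp, hDm] at h
    rwa [Matrix.diagonal_mul, Matrix.mul_diagonal] at h
  have c1 : ∀ j, μ j * μ j ≠ lam * lam → μ j * C j j = 1 := by
    intro j hj
    have hd : μ j * μ j - lam * lam ≠ 0 := sub_ne_zero.mpr hj
    have h := scalar1 j j
    rw [Matrix.diagonal_apply_eq] at h
    have h2 : (μ j * C j j) * (μ j * μ j - lam * lam) = 1 * (μ j * μ j - lam * lam) := by
      linear_combination -h
    exact mul_right_cancel₀ hd h2
  have c4 : ∀ j, μ j * μ j ≠ lam * lam → μ j ≠ 0 := by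
    intro j hj h0
    have h := c1 j hj
    rw [h0, zero_mul] at h
    norm_num at h
  have c5 : ∀ i j, i ≠ j → μ j * μ j ≠ lam * lam → C i j = 0 := by
    intro i j hij hj
    by_cases hi : μ i * μ i = lam * lam
    · have hμi : μ i ≠ 0 := by
        intro h0
        rw [h0, zero_mul] at hi
        nlinarith
      have h := scalar1 i j
      rw [Matrix.diagonal_apply_ne _ hij] at h
      have hd : μ j * μ j - lam * lam ≠ 0 := sub_ne_zero.mpr hj
      have h2 : (μ i * C i j) * (μ j * μ j - lam * lam) = 0 := by linear_combination -h
      have h3 := (mul_eq_zero.mp h2).resolve_right hd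
      exact (mul_eq_zero.mp h3).resolve_left hμi
    · have h := scalar2 i j
      rw [Matrix.diagonal_apply_ne _ hij] at h
      have hd : μ i * μ i - lam * lam ≠ 0 := sub_ne_zero.mpr hi
      have h2 : (μ i * μ i - lam * lam) * (C i j * μ j) = 0 := by linear_combination -h
      have h3 := (mul_eq_zero.mp h2).resolve_left hd
      exact (mul_eq_zero.mp h3).resolve_right (c4 j hj)
  have scalarVC : ∀ a j, (∑ i, V a i * C i j) = (l a)⁻¹ * V a j := by
    intro a j
    have h := Matrix.ext_iff.mpr EqVC a j
    rw [Matrix.mul_apply, hΛi, Matrix.diagonal_mul] at h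
    exact h
  have c6 : ∀ j, μ j * μ j ≠ lam * lam → ∀ a, V a j ≠ 0 → l a = μ j := by
    intro j hj a ha
    have hsum : (∑ i, V a i * C i j) = V a j * C j j := by
      apply Finset.sum_eq_single_of_mem j (Finset.mem_univ j)
      intro i _ hij
      rw [c5 i j hij hj, mul_zero]
    have h2 : V a j * C j j = (l a)⁻¹ * V a j := by rw [← hsum, scalarVC]
    have hμ := c4 j hj
    have hCjj : C j j = (μ j)⁻¹ := eq_inv_of_mul_eq_one_right (c1 j hj)
    have h3 : (μ j)⁻¹ = (l a)⁻¹ := by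
      apply mul_left_cancel₀ ha
      rw [← hCjj]
      linear_combination h2
    exact (inv_inj.mp h3).symm
  have μlam : ∀ j, μ j * μ j = lam * lam → μ j = lam := by
    intro j hj
    rcases mul_self_eq_mul_self_iff.mp hj with h | h
    · exact h
    · exfalso
      have hdiag := Matrix.ext_iff.mpr EqG j j
      rw [Matrix.smul_apply, Matrix.sub_apply, hDm, Matrix.diagonal_apply_eq,
        Matrix.diagonal_mul, Matrix.mul_diagonal, smul_eq_mul] at hdiag
      have h0 := hGpsd j
      have hc := hCpos j
      rw [h] at hdiag
      nlinarith [mul_pos hlam hc, mul_nonneg hlam.le h0]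
  have hZab : ∀ a b, Z a b = ∑ j, V a j * (μ j * V b j) := by
    intro a b
    rw [hspec, hDm, Matrix.mul_apply]
    apply Finset.sum_congr rfl
    intro j _
    rw [Matrix.mul_diagonal, Matrix.transpose_apply, mul_assoc]
  have Zoff : ∀ a b, a ≠ b → Z a b = 0 := by
    intro a b hab
    rw [hZab]
    have hterm : ∀ j, V a j * (μ j * V b j) = lam * (V a j * V b j) := by
      intro j
      by_cases hB : μ j * μ j = lam * lam
      · rw [μlam j hB]; ring
      · have h : V a j = 0 ∨ V b j = 0 := by
          by_contra hcon
          push_neg at hcon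
          exact hdist a b hab ((c6 j hB a hcon.1).trans (c6 j hB b hcon.2).symm)
        rcases h with h | h <;> rw [h] <;> ring
    rw [Finset.sum_congr rfl (fun j _ => hterm j), ← Finset.mul_sum, hVrow a b,
      Matrix.one_apply_ne hab, mul_zero]
  have Zd1 : ∀ a, (∀ j, μ j * μ j ≠ lam * lam → V a j = 0) → Z a a = lam := by
    intro a hall
    rw [hZab]
    have hterm : ∀ j, V a j * (μ j * V a j) = lam * (V a j * V a j) := by
      intro j
      by_cases hB : μ j * μ j = lam * lam
      · rw [μlam j hB]; ring
      · rw [hall j hB]; ring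
    rw [Finset.sum_congr rfl (fun j _ => hterm j), ← Finset.mul_sum, hVrow a a,
      Matrix.one_apply_eq, mul_one]
  have Zd2 : ∀ a, ¬ (∀ j, μ j * μ j ≠ lam * lam → V a j = 0) → Z a a = l a := by
    intro a hnall
    push_neg at hnall
    obtain ⟨j₀, hBj₀, hVaj₀⟩ := hnall
    have hla : l a = μ j₀ := c6 j₀ hBj₀ a hVaj₀
    have hone : V a j₀ * V a j₀ = 1 := by
      have hcol : (∑ b, V b j₀ * V b j₀) = 1 := by rw [hVcol j₀ j₀, Matrix.one_apply_eq]
      rw [← hcol]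
      symm
      apply Finset.sum_eq_single_of_mem a (Finset.mem_univ a)
      intro b _ hba
      have hVb : V b j₀ = 0 := by
        by_contra hVb
        exact hdist b a hba ((c6 j₀ hBj₀ b hVb).trans (c6 j₀ hBj₀ a hVaj₀).symm)
      rw [hVb, zero_mul]
    have hrow : (∑ j, V a j * V a j) = 1 := by rw [hVrow a a, Matrix.one_apply_eq]
    have hrest : ∀ j, j ≠ j₀ → V a j = 0 := by
      intro j hj
      have hsplit : (∑ x ∈ Finset.univ.erase j₀, V a x * V a x) + V a j₀ * V a j₀
          = ∑ x, V a x * V a x := Finset.sum_erase_add _ _ (Finset.mem_univ j₀)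
      have hzero : (∑ x ∈ Finset.univ.erase j₀, V a x * V a x) = 0 := by
        rw [hrow, hone] at hsplit
        linarith
      have := (Finset.sum_eq_zero_iff_of_nonneg
        (fun x _ => mul_self_nonneg (V a x))).mp hzero j (Finset.mem_erase.mpr ⟨hj, Finset.mem_univ j⟩)
      exact mul_self_eq_zero.mp this
    rw [hZab]
    rw [Finset.sum_eq_single_of_mem j₀ (Finset.mem_univ j₀)
      (fun j _ hj => by rw [hrest j hj, zero_mul])]
    rw [hla]
    have : V a j₀ * (μ j₀ * V a j₀) = μ j₀ * (V a j₀ * V a j₀) := by ring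
    rw [this, hone, mul_one]
  set Ifin : Finset (Fin m) :=
    Finset.univ.filter (fun a => ∀ j, μ j * μ j ≠ lam * lam → V a j = 0) with hIfin
  have hZdiagm : Z = Matrix.diagonal (fun a => if a ∈ Ifin then lam else l a) := by
    ext a b
    by_cases hab : a = b
    · subst hab
      rw [Matrix.diagonal_apply_eq]
      by_cases hmem : a ∈ Ifin
      · rw [if_pos hmem]
        exact Zd1 a ((Finset.mem_filter.mp hmem).2)
      · rw [if_neg hmem]
        apply Zd2
        intro hall
        exact hmem (Finset.mem_filter.mpr ⟨Finset.mem_univ _, hall⟩)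
    · rw [Matrix.diagonal_apply_ne _ hab]
      exact Zoff a b hab
  have hMdiag : M = Matrix.diagonal (fun a => if a ∈ Ifin then 1 - lam / l a else 0) := by
    rw [hMz, hZdiagm, hΛi, Matrix.diagonal_mul_diagonal]
    ext a b
    by_cases hab : a = b
    · subst hab
      rw [Matrix.sub_apply, Matrix.one_apply_eq, Matrix.diagonal_apply_eq,
        Matrix.diagonal_apply_eq]
      by_cases hmem : a ∈ Ifin
      · rw [if_pos hmem, if_pos hmem, div_eq_mul_inv]
      · rw [if_neg hmem, if_neg hmem, mul_inv_cancel₀ (ne_of_gt (hpos a)), sub_self]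
    · rw [Matrix.sub_apply, Matrix.one_apply_ne hab, Matrix.diagonal_apply_ne _ hab,
        Matrix.diagonal_apply_ne _ hab, sub_zero]
  have hGaa : ∀ a, 0 ≤ G a a := by
    intro a
    rw [hGdef, Matrix.mul_apply]
    apply Finset.sum_nonneg
    intro c _
    rw [Matrix.transpose_apply]
    exact mul_self_nonneg _
  have goalA : ∀ a ∈ Ifin, lam < l a := by
    intro a ha
    have h := Matrix.ext_iff.mpr hG1 a a
    rw [hZsym, hMdiag, hZdiagm, Matrix.diagonal_mul_diagonal, Matrix.smul_apply,
      Matrix.diagonal_apply_eq, if_pos ha, if_pos ha, smul_eq_mul] at h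
    have h0 := hGaa a
    have hla := hpos a
    have hle : lam ≤ l a := by
      have h2 : 0 ≤ (1 - lam / l a) * lam := by nlinarith [mul_nonneg hlam.le h0]
      have h3 : 0 ≤ 1 - lam / l a := by
        by_contra hg
        push_neg at hg
        nlinarith [mul_neg_of_neg_of_pos hg hlam]
      have h4 : lam / l a ≤ 1 := by linarith
      exact (div_le_one hla).mp h4
    exact lt_of_le_of_ne hle (fun h' => hne a h'.symm)
  have goalB : Ifin.card ≤ k := by
    have hrank1 : M.rank ≤ k := by
      rw [hMdef]
      exact le_trans (Matrix.rank_mul_le_left P Q) (Matrix.rank_le_width P)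
    have hrank2 : M.rank = Ifin.card := by
      rw [hMdiag, Matrix.rank_diagonal, Fintype.card_subtype]
      congr 1
      ext a
      simp only [Finset.mem_filter, Finset.mem_univ, true_and]
      constructor
      · intro hne0
        by_contra hmem
        rw [if_neg hmem] at hne0
        exact hne0 rfl
      · intro hmem
        rw [if_pos hmem]
        have := goalA a hmem
        have hla := hpos a
        have : lam / l a < 1 := (div_lt_one hla).mpr this
        intro h0
        nlinarith
    omega
  have goalC : Q = Pᵀ := by
    have hQZ : lam • Pᵀ = Q * Z := by rw [hPt, hZsym]
    have hfact : (Q - Pᵀ) * (Z + lam • 1) = 0 := by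
      rw [Matrix.sub_mul, Matrix.mul_add, Matrix.mul_add, Matrix.mul_smul, Matrix.mul_smul,
        Matrix.mul_one, Matrix.mul_one, e1, hQZ]
      abel
    have hlam1 : lam • (1 : Matrix (Fin m) (Fin m) ℝ) = Matrix.diagonal (fun _ => lam) := by
      ext i j
      by_cases h : i = j
      · subst h; simp [Matrix.one_apply_eq]
      · simp [Matrix.one_apply_ne h, Matrix.diagonal_apply_ne _ h]
    have hzpos : ∀ a, (if a ∈ Ifin then lam else l a) + lam ≠ 0 := by
      intro a
      by_cases hmem : a ∈ Ifin
      · rw [if_pos hmem]; linarith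
      · rw [if_neg hmem]; have := hpos a; linarith
    have hinv : (Z + lam • 1) *
        Matrix.diagonal (fun a => ((if a ∈ Ifin then lam else l a) + lam)⁻¹) = 1 := by
      rw [hZdiagm, hlam1, Matrix.diagonal_add, Matrix.diagonal_mul_diagonal]
      have h : (fun a => ((if a ∈ Ifin then lam else l a) + lam)
          * ((if a ∈ Ifin then lam else l a) + lam)⁻¹) = fun _ => (1 : ℝ) := by
        funext a
        exact mul_inv_cancel₀ (hzpos a)
      rw [h, Matrix.diagonal_one]
    have h0 : (Q - Pᵀ) * ((Z + lam • 1) *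
        Matrix.diagonal (fun a => ((if a ∈ Ifin then lam else l a) + lam)⁻¹)) = 0 := by
      rw [← Matrix.mul_assoc, hfact, Matrix.zero_mul]
    rw [hinv, Matrix.mul_one] at h0
    exact sub_eq_zero.mp h0
  exact ⟨goalC, Ifin, goalA, goalB, hMdiag⟩

open Matrix

/-- At a critical point of the sum loss `L_σ`, the encoder is the transpose of
the decoder and `W₂W₁ = U D Uᵀ` where `D` is diagonal with entries `1 − λ/λᵢ`
on an index set `𝓘 ⊆ {i : λᵢ > λ}` of size at most `k` and `0` elsewhere. -/
theorem sum_critical_points {m n k : ℕ} (lam : ℝ) (hlam : 0 < lam)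
    (X : Matrix (Fin m) (Fin n) ℝ)
    (U : Matrix (Fin m) (Fin m) ℝ) (l : Fin m → ℝ)
    (hU : Uᵀ * U = 1)
    (hXXt : X * Xᵀ = U * Matrix.diagonal l * Uᵀ)
    (hpos : ∀ i, 0 < l i)
    (hdist : ∀ i j : Fin m, i ≠ j → l i ≠ l j)
    (hne : ∀ i, l i ≠ lam)
    (W1 : Matrix (Fin k) (Fin m) ℝ) (W2 : Matrix (Fin m) (Fin k) ℝ)
    (h1 : W2ᵀ * (W2 * W1 - 1) * (X * Xᵀ) + lam • W1 = 0)
    (h2 : (W2 * W1 - 1) * (X * Xᵀ) * W1ᵀ + lam • W2 = 0) :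
    W1 = W2ᵀ ∧
      ∃ I : Finset (Fin m), (∀ i ∈ I, lam < l i) ∧ I.card ≤ k ∧
        W2 * W1 =
          U * Matrix.diagonal (fun i => if i ∈ I then 1 - lam / l i else 0) * Uᵀ := by
  classical
  have hUU : U * Uᵀ = 1 := mul_eq_one_comm.mp hU
  have hc1 : ∀ {p : ℕ} (x : Matrix (Fin m) (Fin p) ℝ), Uᵀ * (U * x) = x := by
    intro p x; rw [← Matrix.mul_assoc, hU, Matrix.one_mul]
  have hc2 : ∀ {p : ℕ} (x : Matrix (Fin m) (Fin p) ℝ), U * (Uᵀ * x) = x := by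
    intro p x; rw [← Matrix.mul_assoc, hUU, Matrix.one_mul]
  set Λ : Matrix (Fin m) (Fin m) ℝ := Matrix.diagonal l with hΛ
  set P : Matrix (Fin m) (Fin k) ℝ := Uᵀ * W2 with hP
  set Q : Matrix (Fin k) (Fin m) ℝ := W1 * U with hQ
  have h1' : W2ᵀ * (W2 * W1 - 1) * (U * Λ * Uᵀ) + lam • W1 = 0 := by
    rw [hΛ, ← hXXt]; exact h1
  have h2' : (W2 * W1 - 1) * (U * Λ * Uᵀ) * W1ᵀ + lam • W2 = 0 := by
    rw [hΛ, ← hXXt]; exact h2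
  have h1'' : W2ᵀ * (W2 * W1 - 1) * (U * Λ * Uᵀ) * U + lam • Q = 0 := by
    have h := congrArg (fun Y => Y * U) h1'
    simpa only [Matrix.add_mul, Matrix.smul_mul, Matrix.zero_mul, hQ] using h
  have h2'' : Uᵀ * ((W2 * W1 - 1) * (U * Λ * Uᵀ) * W1ᵀ) + lam • P = 0 := by
    have h := congrArg (fun Y => Uᵀ * Y) h2'
    simpa only [Matrix.mul_add, Matrix.mul_smul, Matrix.mul_zero, hP] using h
  have expand1 : Pᵀ * ((1 - P * Q) * Λ) = -(W2ᵀ * (W2 * W1 - 1) * (U * Λ * Uᵀ) * U) := by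
    rw [hP, hQ, Matrix.transpose_mul, Matrix.transpose_transpose]
    simp only [Matrix.sub_mul, Matrix.mul_sub, Matrix.one_mul, Matrix.mul_one, neg_sub,
      Matrix.mul_assoc, hc1, hc2, hU, hUU]
  have expand2 : ((1 - P * Q) * Λ) * Qᵀ = -(Uᵀ * ((W2 * W1 - 1) * (U * Λ * Uᵀ) * W1ᵀ)) := by
    rw [hP, hQ, Matrix.transpose_mul]
    simp only [Matrix.sub_mul, Matrix.mul_sub, Matrix.one_mul, Matrix.mul_one, neg_sub,
      Matrix.mul_assoc, hc1, hc2, hU, hUU]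
  have e1 : lam • Q = Pᵀ * ((1 - P * Q) * Λ) := by
    rw [expand1]
    exact eq_neg_of_add_eq_zero_right h1''
  have e2 : lam • P = ((1 - P * Q) * Λ) * Qᵀ := by
    rw [expand2]
    exact eq_neg_of_add_eq_zero_right h2''
  obtain ⟨hQP, I, hI1, hI2, hPQ⟩ := key_lemma lam hlam l hpos hdist hne Q P e1 e2
  have hW1 : W1 = W2ᵀ := by
    calc W1 = W1 * (U * Uᵀ) := by rw [hUU, Matrix.mul_one]
    _ = Q * Uᵀ := by rw [hQ, Matrix.mul_assoc]
    _ = Pᵀ * Uᵀ := by rw [hQP]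
    _ = W2ᵀ := by
        rw [hP, Matrix.transpose_mul, Matrix.transpose_transpose, Matrix.mul_assoc, hUU,
          Matrix.mul_one]
  have hconj : U * (P * Q) * Uᵀ = W2 * W1 := by
    rw [hP, hQ]
    simp only [Matrix.mul_assoc, hc1, hc2, hUU, hU, Matrix.mul_one]
  rw [hPQ] at hconj
  exact ⟨hW1, I, hI1, hI2, hconj.symm⟩
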